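/- arXiv:1905.11966 — 3 statements merged into one kernel-verified Lean document; each statement's English description precedes it below -/
import Mathlib

section
/- Let R be a binary relation on a type α, and define the well-founded part WP(R) as the least subset of α closed under progressiveness: if every x with R x a lies in WP(R), then a ∈ WP(R). Then WP(R) satisfies the induction principle: for any predicate P, if (∀ a, (∀ x, R x a → x ∈ WP(R) ∧ P x) → P a), then every element of WP(R) satisfies P. Moreover, WP(R) can be realized as the set {a | a ◁ ∅} for the inductively generated basic cover on α with index family I a = α and C a i = {z | R z a}. -/
inductive Cover {A : Type*} (I : A → Type*) (C : ∀ a, I a → Set A) (V : Set A) : A → Prop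
  | rf {a : A} : a ∈ V → Cover I C V a
  | tr {a : A} (i : I a) : (∀ y ∈ C a i, Cover I C V y) → Cover I C V a

/-- The well-founded part of R: the least subset closed under progressiveness. -/
def WP {α : Type*} (R : α → α → Prop) : Set α :=
  ⋂₀ {A : Set α | ∀ a, (∀ x, R x a → x ∈ A) → a ∈ A}

theorem stmt12 {α : Type*} (R : α → α → Prop) :
    (∀ P : α → Prop,
      (∀ a, (∀ x, R x a → x ∈ WP R ∧ P x) → P a) → ∀ a ∈ WP R, P a) ∧
    WP R = {a | Cover (fun _ : α => α) (fun a _ => {z | R z a}) (∅ : Set α) a} := by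
  constructor
  · intro P hP a ha
    have key := ha {b | b ∈ WP R ∧ P b} ?_
    · exact key.2
    · intro b hb
      refine ⟨fun A hA => hA b fun z hz => (hb z hz).1 A hA, hP b hb⟩
  · apply Set.eq_of_subset_of_subset
    · intro a ha
      apply ha
      intro b hb
      exact Cover.tr b hb
    · intro a ha
      induction ha with
      | rf h => exact absurd h (Set.notMem_empty _)
      | tr i h ih =>
        intro A hA
        exact hA _ fun x hx => ih x hx A hA
end

section
/- In the tree cover ◁ over a finite type E = Fin 2 (Cantor formal topology) generated by reflexivity, the initial-segment rule, and the branching rule, every covered list is covered by a finite subset: if l ◁ V then there exists a finite set V₀ ⊆ V with l ◁ V₀. -/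
inductive TCover (E : Type*) : List E → Set (List E) → Prop
  | rf {l V} : l ∈ V → TCover E l V
  | seg {l V} (t : List E) : TCover E l V → TCover E (l ++ t) V
  | branch {l V} : (∀ x : E, TCover E (l ++ [x]) V) → TCover E l V

lemma TCover.mono {E : Type*} {l : List E} {V W : Set (List E)}
    (h : TCover E l V) (hVW : V ⊆ W) : TCover E l W := by
  induction h with
  | rf hm => exact .rf (hVW hm)
  | seg t _ ih => exact .seg t (ih hVW)
  | branch _ ih => exact .branch fun x => ih x hVW

theorem stmt16 (l : List (Fin 2)) (V : Set (List (Fin 2))) (h : TCover (Fin 2) l V) :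
    ∃ V₀ : Set (List (Fin 2)), V₀ ⊆ V ∧ V₀.Finite ∧ TCover (Fin 2) l V₀ := by
  induction h with
  | @rf l V hm => exact ⟨{l}, by simpa, Set.finite_singleton l, .rf rfl⟩
  | seg t _ ih =>
    obtain ⟨V₀, hsub, hfin, hc⟩ := ih
    exact ⟨V₀, hsub, hfin, .seg t hc⟩
  | branch _ ih =>
    choose W hsub hfin hc using ih
    refine ⟨⋃ x, W x, Set.iUnion_subset hsub, Set.finite_iUnion hfin, .branch fun x => ?_⟩
    exact (hc x).mono (Set.subset_iUnion W x)
end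

section
/- In Joyal's inductive cover ◁ᵣ on ℚ × ℚ, the cover relation is stable under shrinking on the covered set's side combined with transitivity: if ⟨p,q⟩ ◁ᵣ U and every element ⟨p',q'⟩ of U satisfies ⟨p',q'⟩ ◁ᵣ W, then ⟨p,q⟩ ◁ᵣ W. -/
inductive JCover : ℚ × ℚ → Set (ℚ × ℚ) → Prop
  | rf {pq U} : pq ∈ U → JCover pq U
  | empty {p q U} : q ≤ p → JCover (p, q) U
  | shrink {p q U} (p' q' : ℚ) : p' ≤ p → p < q → q ≤ q' →
      JCover (p', q') U → JCover (p, q) U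
  | split {p q U} (r s : ℚ) : p ≤ r → r < s → s ≤ q →
      JCover (p, s) U → JCover (r, q) U → JCover (p, q) U
  | wc {p q U} : (∀ p' q' : ℚ, p < p' → p' < q' → q' < q → JCover (p', q') U) →
      JCover (p, q) U

theorem stmt19_aux {pq U W} (h : JCover pq U)
    (hU : ∀ pq ∈ U, JCover pq W) : JCover pq W := by
  induction h with
  | rf hm => exact hU _ hm
  | empty hle => exact JCover.empty hle
  | shrink p' q' h1 h2 h3 _ ih => exact JCover.shrink p' q' h1 h2 h3 (ih hU)
  | split r s h1 h2 h3 _ _ ih1 ih2 => exact JCover.split r s h1 h2 h3 (ih1 hU) (ih2 hU)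
  | wc _ ih => exact JCover.wc fun p' q' a b c => ih p' q' a b c hU

theorem stmt19 (p q : ℚ) (U W : Set (ℚ × ℚ)) (h : JCover (p, q) U)
    (hU : ∀ pq ∈ U, JCover pq W) : JCover (p, q) W := stmt19_aux h hU
end
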